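/- Two signed graphs (G,σ) and (G,σ') on the same underlying graph G are switching equivalent (one can be obtained from the other by a sequence of resignings at vertices) if and only if they have the same set of negative circuits. -/
import Mathlib


open SimpleGraph

/-- The switching function associated with `s : V → ℤˣ`: switching multiplies the
sign of every edge `uv` by `s u * s v`. -/
def switchFn {V : Type*} (s : V → ℤˣ) : Sym2 V → ℤˣ :=
  Sym2.lift ⟨fun u v => s u * s v, fun u v => mul_comm (s u) (s v)⟩

lemma switchFn_mk {V : Type*} (s : V → ℤˣ) (u v : V) : switchFn s s(u, v) = s u * s v := rfl

/-- The product of the switching function over the edges of a walk telescopes. -/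
lemma switch_walk_prod {V : Type*} {G : SimpleGraph V} (s : V → ℤˣ) :
    ∀ {u v : V} (w : G.Walk u v), (w.edges.map (switchFn s)).prod = s u * s v := by
  intro u v w
  induction w with
  | nil => rw [Walk.edges_nil, List.map_nil, List.prod_nil, Int.units_mul_self]
  | @cons a c d h p ih =>
    rw [Walk.edges_cons, List.map_cons, List.prod_cons, ih, switchFn_mk,
      mul_assoc (s a), ← mul_assoc (s c) (s c), Int.units_mul_self, one_mul]

/-- If every cycle has product `1` under `τ`, then every closed walk has product `1`. -/
lemma closed_walk_prod {V : Type*} {G : SimpleGraph V} (τ : Sym2 V → ℤˣ)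
    (H : ∀ (u : V) (w : G.Walk u u), w.IsCycle → (w.edges.map τ).prod = 1) :
    ∀ (n : ℕ) (u : V) (w : G.Walk u u), w.length = n → (w.edges.map τ).prod = 1 := by
  classical
  intro n
  induction n using Nat.strong_induction_on with
  | _ n IH =>
  intro u w hn
  cases w with
  | nil => simp
  | @cons _ b _ h p =>
    by_cases hnd : ((Walk.cons h p).support.tail.Nodup)
    · -- tail of support has no duplicates
      have hnd' : p.support.Nodup := by simpa using hnd
      have hp : p.IsPath := by rw [Walk.isPath_def]; exact hnd'
      by_cases he : s(u, b) ∈ p.edges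
      · -- the edge `ub` reappears; then the walk is `u-b-u`
        cases p with
        | nil => exact absurd h (G.irrefl)
        | @cons _ c _ h2 p2 =>
          rw [Walk.edges_cons, List.mem_cons] at he
          rcases he with he | he
          · have hcu : c = u := by
              rw [Sym2.eq_iff] at he
              rcases he with ⟨hub, _⟩ | ⟨huc, _⟩
              · exact absurd hub h.ne
              · exact huc.symm
            subst hcu
            -- p2 is a path from u to u inside a path, so it is nil
            cases p2 with
            | nil =>
              simp only [Walk.edges_cons, Walk.edges_nil, List.map_cons, List.map_nil,
                List.prod_cons, List.prod_nil, mul_one]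
              rw [he, Int.units_mul_self]
            | @cons _ d _ h3 p3 =>
              exfalso
              rw [Walk.support_cons, List.nodup_cons] at hnd'
              obtain ⟨-, h4⟩ := hnd'
              rw [Walk.support_cons, List.nodup_cons] at h4
              exact h4.1 (Walk.end_mem_support p3)
          · exfalso
            have hb : b ∈ p2.support := Walk.snd_mem_support_of_mem_edges _ he
            rw [Walk.support_cons, List.nodup_cons] at hnd'
            exact hnd'.1 hb
      · -- it is a genuine cycle
        have hcyc : (Walk.cons h p).IsCycle := (Walk.cons_isCycle_iff p h).mpr ⟨hp, he⟩
        exact H u _ hcyc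
    · -- some vertex repeats: split the walk into two shorter closed walks
      have h1 : ¬ p.support.Nodup := by simpa using hnd
      rw [List.nodup_iff_count_le_one] at h1
      push_neg at h1
      obtain ⟨x, hx2⟩ := h1
      have hx : x ∈ p.support := by
        rw [← List.count_pos_iff]; omega
      have hspec : (p.takeUntil x hx).append (p.dropUntil x hx) = p := p.take_spec hx
      have hcount : ((p.takeUntil x hx).support.count x) = 1 :=
        p.count_support_takeUntil_eq_one hx
      have hc3 : ((p.takeUntil x hx).support.count x)
          + ((p.dropUntil x hx).support.tail.count x) = p.support.count x := by
        conv_rhs => rw [← hspec]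
        rw [Walk.support_append, List.count_append]
      have hlen : (p.takeUntil x hx).length + (p.dropUntil x hx).length = p.length := by
        have := congrArg Walk.length hspec
        rwa [Walk.length_append] at this
      cases hD : p.dropUntil x hx with
      | nil =>
        exfalso
        rw [hD] at hc3
        simp only [Walk.support_nil, List.tail_cons, List.count_nil] at hc3
        omega
      | @cons _ y _ hd2 d2 =>
        have hxd2 : x ∈ d2.support := by
          rw [hD] at hc3
          rw [Walk.support_cons, List.tail_cons] at hc3
          rw [← List.count_pos_iff]; omega
        have hspec2 : (d2.takeUntil x hxd2).append (d2.dropUntil x hxd2) = d2 :=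
          d2.take_spec hxd2
        have hlen2 : (d2.takeUntil x hxd2).length + (d2.dropUntil x hxd2).length = d2.length := by
          have := congrArg Walk.length hspec2
          rwa [Walk.length_append] at this
        have hlend : (p.dropUntil x hx).length = d2.length + 1 := by
          rw [hD, Walk.length_cons]
        have hnlen : p.length + 1 = n := by simpa using hn
        -- the two shorter closed walks
        set c1 : G.Walk x x := Walk.cons hd2 (d2.takeUntil x hxd2) with hc1
        set c2 : G.Walk u u := Walk.cons h ((p.takeUntil x hx).append (d2.dropUntil x hxd2))
          with hc2
        have hl1 : c1.length < n := by
          rw [hc1, Walk.length_cons]; omega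
        have hl2 : c2.length < n := by
          rw [hc2, Walk.length_cons, Walk.length_append]; omega
        have P1 := IH c1.length hl1 x c1 rfl
        have P2 := IH c2.length hl2 u c2 rfl
        -- expand the edge lists
        have hpe : p.edges = (p.takeUntil x hx).edges
            ++ (s(x, y) :: ((d2.takeUntil x hxd2).edges ++ (d2.dropUntil x hxd2).edges)) := by
          conv_lhs => rw [← hspec]
          rw [Walk.edges_append, hD, Walk.edges_cons]
          conv_lhs => rw [← hspec2]
          rw [Walk.edges_append]
        rw [hc1, Walk.edges_cons] at P1
        rw [hc2, Walk.edges_cons, Walk.edges_append] at P2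
        rw [Walk.edges_cons, hpe]
        simp only [List.map_cons, List.map_append, List.prod_cons, List.prod_append] at P1 P2 ⊢
        have expand : τ s(u, b) * (((p.takeUntil x hx).edges.map τ).prod *
            (τ s(x, y) * (((d2.takeUntil x hxd2).edges.map τ).prod *
              ((d2.dropUntil x hxd2).edges.map τ).prod)))
            = (τ s(x, y) * ((d2.takeUntil x hxd2).edges.map τ).prod)
              * (τ s(u, b) * (((p.takeUntil x hx).edges.map τ).prod *
                ((d2.dropUntil x hxd2).edges.map τ).prod)) := by
          rw [Units.ext_iff]
          push_cast
          ring
        rw [expand, P1, P2, one_mul]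

/-- Zaslavsky's theorem: two signatures on the same graph are switching
equivalent iff they have the same set of negative circuits (cycles). -/
theorem switching_equivalent_iff_same_negative_circuits {V : Type*} [Fintype V]
    (G : SimpleGraph V) (σ σ' : Sym2 V → ℤˣ) :
    (∃ s : V → ℤˣ, ∀ e ∈ G.edgeSet, σ' e = switchFn s e * σ e) ↔
      ∀ (u : V) (w : G.Walk u u), w.IsCycle →
        ((w.edges.map σ).prod = -1 ↔ (w.edges.map σ').prod = -1) := by
  constructor
  · rintro ⟨s, hs⟩ u w _
    have hedge : ∀ e ∈ w.edges, σ' e = switchFn s e * σ e := fun e he =>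
      hs e (w.edges_subset_edgeSet he)
    have hkey : (w.edges.map σ').prod = (w.edges.map σ).prod := by
      rw [List.map_congr_left hedge, List.prod_map_mul, switch_walk_prod,
        Int.units_mul_self, one_mul]
    rw [hkey]
  · intro hcyc
    classical
    set τ : Sym2 V → ℤˣ := fun e => σ' e * σ e with hτ
    have H : ∀ (u : V) (w : G.Walk u u), w.IsCycle → (w.edges.map τ).prod = 1 := by
      intro u w hw
      have hmul : (w.edges.map τ).prod = (w.edges.map σ').prod * (w.edges.map σ).prod := by
        rw [hτ]; exact List.prod_map_mul
      rcases Int.units_eq_one_or (w.edges.map σ).prod with h1 | h1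
      · have h2 : (w.edges.map σ').prod = 1 := by
          rcases Int.units_eq_one_or (w.edges.map σ').prod with h2 | h2
          · exact h2
          · exact absurd ((hcyc u w hw).mpr h2) (by rw [h1]; decide)
        rw [hmul, h1, h2, one_mul]
      · have h2 := (hcyc u w hw).mp h1
        rw [hmul, h1, h2]; decide
    have key := closed_walk_prod τ H
    have hreach : ∀ v : V, G.Reachable ((G.connectedComponentMk v).out) v := fun v =>
      ConnectedComponent.exact ((G.connectedComponentMk v).out_eq)
    let wt : ∀ v : V, G.Walk ((G.connectedComponentMk v).out) v := fun v => (hreach v).some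
    refine ⟨fun v => (((wt v).edges).map τ).prod, ?_⟩
    intro e
    refine Sym2.ind (fun a b he => ?_) e
    have hab : G.Adj a b := he
    have hout : (G.connectedComponentMk b).out = (G.connectedComponentMk a).out := by
      rw [ConnectedComponent.sound hab.reachable]
    set c : G.Walk ((G.connectedComponentMk a).out) ((G.connectedComponentMk a).out) :=
      ((wt a).append (Walk.cons hab ((wt b).reverse))).copy rfl hout with hcdef
    have hc := key c.length _ c rfl
    have hce : (c.edges.map τ).prod
        = (((wt a).edges).map τ).prod * (τ s(a, b) * (((wt b).edges).map τ).prod) := by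
      rw [hcdef, Walk.edges_copy, Walk.edges_append, Walk.edges_cons, Walk.edges_reverse]
      rw [List.map_append, List.prod_append, List.map_cons, List.prod_cons,
        List.map_reverse, List.prod_reverse]
    rw [hce] at hc
    have hτe : τ s(a, b) = (((wt a).edges).map τ).prod * (((wt b).edges).map τ).prod := by
      rcases Int.units_eq_one_or ((((wt a).edges).map τ).prod) with h1 | h1 <;>
        rcases Int.units_eq_one_or ((((wt b).edges).map τ).prod) with h2 | h2 <;>
        rcases Int.units_eq_one_or (τ s(a, b)) with h3 | h3 <;>
        rw [h1, h2, h3] at hc ⊢ <;> first | rfl | (exfalso; revert hc; decide) | decide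
    rw [switchFn_mk]
    have : (fun v => (((wt v).edges).map τ).prod) a * (fun v => (((wt v).edges).map τ).prod) b
        = σ' s(a, b) * σ s(a, b) := by
      rw [← hτe, hτ]
    rw [this, mul_assoc, Int.units_mul_self, mul_one]
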